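/- Let (Ω, F, P) be a probability space, ψ : [1,∞) → ℝ continuous, strictly increasing, positive with ψ(1) = 1, and q = (q(m))_{m ≥ 1} a strictly increasing sequence with q(1) = 1 and q(m) → ∞. Define h(x) := sup_{m ≥ 1} [ q(m) ln x − q(m) ln ψ(q(m)) ] for x ≥ e. If ξ is a random variable with 0 < ‖ξ‖_{G^q ψ} < ∞, then for every x ≥ e · ‖ξ‖_{G^q ψ} one has the tail estimate P(|ξ| ≥ x) ≤ exp( − h( x / ‖ξ‖_{G^q ψ} ) ). -/

import Mathlib

open MeasureTheory ENNReal Set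

/-- The discrete Grand Lebesgue norm `‖ξ‖_{G^q ψ} = sup_{m ≥ 1} |ξ|_{q(m)} / ψ(q(m))`
associated to a sequence `q`, with values in `ℝ≥0∞`. -/
noncomputable def discreteGrandLebesgueNorm {Ω : Type*} [MeasurableSpace Ω] (P : Measure Ω)
    (ψ : ℝ → ℝ) (q : ℕ → ℝ) (f : Ω → ℝ) : ℝ≥0∞ :=
  ⨆ m : {m : ℕ // 1 ≤ m}, eLpNorm f (ENNReal.ofReal (q m.1)) P / ENNReal.ofReal (ψ (q m.1))

/-- **Tail estimate (1.7).** Let `ψ : [1,∞) → ℝ` be continuous, strictly increasing, positive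
with `ψ(1) = 1`, and let `q(m)`, `m ≥ 1`, be a strictly increasing sequence with `q(1) = 1`,
`q(m) → ∞`. Set `h(x) := sup_{m ≥ 1} [q(m) ln x − q(m) ln ψ(q(m))]`. If
`0 < N := ‖ξ‖_{G^q ψ} < ∞`, then for every `x ≥ e·N` one has
`P(|ξ| ≥ x) ≤ exp(−h(x/N))`. Here `exp(−h(x/N))`, with `h` the supremum over `m ≥ 1`, is
written equivalently as the infimum over `m ≥ 1` of
`exp(−[q(m) ln(x/N) − q(m) ln ψ(q(m))])`, since `t ↦ exp(−t)` is a continuous antitone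
bijection (sending `+∞` to `0`). -/
theorem discrete_GLS_tail_estimate
    {Ω : Type*} [MeasurableSpace Ω] (P : Measure Ω) [IsProbabilityMeasure P]
    (ψ : ℝ → ℝ) (hψc : ContinuousOn ψ (Ici 1)) (hψm : StrictMonoOn ψ (Ici 1))
    (hψpos : ∀ p, 1 ≤ p → 0 < ψ p) (hψ1 : ψ 1 = 1)
    (q : ℕ → ℝ) (hq : ∀ m, 1 ≤ m → q m < q (m + 1)) (hq1 : q 1 = 1)
    (hqlim : Filter.Tendsto q Filter.atTop Filter.atTop)
    (ξ : Ω → ℝ) (hξ : Measurable ξ)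
    (hpos : 0 < discreteGrandLebesgueNorm P ψ q ξ)
    (hfin : discreteGrandLebesgueNorm P ψ q ξ ≠ ∞)
    (x : ℝ) (hx : Real.exp 1 * (discreteGrandLebesgueNorm P ψ q ξ).toReal ≤ x) :
    P {ω | x ≤ |ξ ω|} ≤
      ⨅ m : {m : ℕ // 1 ≤ m},
        ENNReal.ofReal
          (Real.exp (-(q m.1 * Real.log (x / (discreteGrandLebesgueNorm P ψ q ξ).toReal)
            - q m.1 * Real.log (ψ (q m.1))))) := by
  set N := discreteGrandLebesgueNorm P ψ q ξ with hN
  set Nr := N.toReal with hNr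
  have hNrpos : 0 < Nr := ENNReal.toReal_pos hpos.ne' hfin
  have hxpos : 0 < x :=
    lt_of_lt_of_le (by positivity) hx
  -- q m ≥ 1 for m ≥ 1
  have hq1le : ∀ m : ℕ, 1 ≤ m → 1 ≤ q m := by
    intro m hm
    induction m with
    | zero => omega
    | succ n ih =>
      rcases Nat.eq_or_lt_of_le hm with h | h
      · rw [← h]; exact hq1.ge
      · have hn : 1 ≤ n := by omega
        exact (ih hn).trans (hq n hn).le
  apply le_iInf
  rintro ⟨m, hm⟩
  have hqm : 1 ≤ q m := hq1le m hm
  have hψqm : 0 < ψ (q m) := hψpos _ hqm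
  -- eLpNorm bound
  have hle : eLpNorm ξ (ENNReal.ofReal (q m)) P / ENNReal.ofReal (ψ (q m)) ≤ N :=
    le_iSup (fun k : {k : ℕ // 1 ≤ k} =>
      eLpNorm ξ (ENNReal.ofReal (q k.1)) P / ENNReal.ofReal (ψ (q k.1))) ⟨m, hm⟩
  have hψ0 : ENNReal.ofReal (ψ (q m)) ≠ 0 := by
    simp only [ne_eq, ENNReal.ofReal_eq_zero, not_le]; exact hψqm
  have hle' : eLpNorm ξ (ENNReal.ofReal (q m)) P ≤ N * ENNReal.ofReal (ψ (q m)) :=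
    (ENNReal.div_le_iff hψ0 ENNReal.ofReal_ne_top).1 hle
  have hp0 : ENNReal.ofReal (q m) ≠ 0 := by
    simp only [ne_eq, ENNReal.ofReal_eq_zero, not_le]; linarith
  have hpt : (ENNReal.ofReal (q m)).toReal = q m := ENNReal.toReal_ofReal (by linarith)
  have hmarkov := meas_ge_le_mul_pow_eLpNorm_enorm P hp0 ENNReal.ofReal_ne_top
    hξ.aestronglyMeasurable (ε := ENNReal.ofReal x) (by simp only [ne_eq, ENNReal.ofReal_eq_zero, not_le]; exact hxpos)
    (fun h => absurd h ENNReal.ofReal_ne_top)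
  rw [hpt] at hmarkov
  have hset : {ω | x ≤ |ξ ω|} = {ω | ENNReal.ofReal x ≤ (‖ξ ω‖₊ : ℝ≥0∞)} := by
    ext ω
    rw [mem_setOf_eq, mem_setOf_eq, ← ENNReal.ofReal_coe_nnreal, coe_nnnorm,
      ENNReal.ofReal_le_ofReal_iff (norm_nonneg _), Real.norm_eq_abs]
  rw [hset]
  refine hmarkov.trans ?_
  have hNfr : N = ENNReal.ofReal Nr := (ENNReal.ofReal_toReal hfin).symm
  have key : (ENNReal.ofReal x)⁻¹ ^ (q m) * eLpNorm ξ (ENNReal.ofReal (q m)) P ^ (q m)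
      ≤ ENNReal.ofReal ((Nr * ψ (q m) / x) ^ (q m)) := by
    calc (ENNReal.ofReal x)⁻¹ ^ (q m) * eLpNorm ξ (ENNReal.ofReal (q m)) P ^ (q m)
        ≤ (ENNReal.ofReal x)⁻¹ ^ (q m) * (N * ENNReal.ofReal (ψ (q m))) ^ (q m) := by
          gcongr
      _ = ((ENNReal.ofReal x)⁻¹ * (N * ENNReal.ofReal (ψ (q m)))) ^ (q m) := by
          rw [← ENNReal.mul_rpow_of_nonneg _ _ (by linarith)]
      _ = (ENNReal.ofReal (Nr * ψ (q m) / x)) ^ (q m) := by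
          congr 1
          rw [hNfr, ← ENNReal.ofReal_mul hNrpos.le, ENNReal.ofReal_div_of_pos hxpos,
            ENNReal.div_eq_inv_mul]
      _ = ENNReal.ofReal ((Nr * ψ (q m) / x) ^ (q m)) := by
          rw [ENNReal.ofReal_rpow_of_pos (by positivity)]
  refine key.trans (le_of_eq ?_)
  congr 1
  rw [Real.rpow_def_of_pos (by positivity), Real.log_div (by positivity) (ne_of_gt hxpos),
    Real.log_mul (ne_of_gt hNrpos) (ne_of_gt hψqm), Real.log_div (ne_of_gt hxpos) (ne_of_gt hNrpos)]
  ring_nf
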